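/- Let G be an Abelian group of cardinality γ > ℵ₀. Then there exists a family (G_α)_{α<γ} of subgroups of G such that: G_0 is the trivial subgroup; G_α ⊊ G_β whenever α < β < γ; G_β = ⋃_{α<β} G_α for every limit ordinal β < γ; ⋃_{α<γ} G_α = G; and the index of G_α in G_{α+1} equals ℵ₀ for every α < γ. -/

import Mathlib

open Cardinal Pointwise
open scoped Classical

universe u

namespace ExistsSubgroupChainAux

section GroupAux

variable {G : Type u} [Group G]

lemma mk_closure_le (s : Set G) : #(Subgroup.closure s) ≤ max #s ℵ₀ := by
  rcases s.eq_empty_or_nonempty with rfl | hs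
  · rw [Subgroup.closure_empty]
    refine le_trans ?_ (le_max_right _ _)
    refine le_trans ?_ Cardinal.one_le_aleph0
    exact Cardinal.le_one_iff_subsingleton.2 inferInstance
  · have : Nonempty s := hs.to_subtype
    have hrange : (FreeGroup.lift (fun x : s => (x : G))).range = Subgroup.closure s := by
      rw [FreeGroup.range_lift_eq_closure, Subtype.range_coe]
    calc #(Subgroup.closure s)
        = #((FreeGroup.lift (fun x : s => (x : G))).range) := by rw [hrange]
      _ ≤ #(FreeGroup s) :=
          Cardinal.mk_le_of_surjective (MonoidHom.rangeRestrict_surjective _)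
      _ = max #s ℵ₀ := Cardinal.mk_freeGroup s

noncomputable def pickOut (H : Subgroup G) : G :=
  if h : ∃ x, x ∉ H then h.choose else 1

lemma pickOut_not_mem {H : Subgroup G} (h : ∃ x, x ∉ H) : pickOut H ∉ H := by
  rw [pickOut, dif_pos h]
  exact h.choose_spec

noncomputable def Wseq (q : G) : ℕ → Subgroup G
  | 0 => Subgroup.closure {q}
  | n + 1 => Subgroup.closure (insert (pickOut (Wseq q n)) ((Wseq q n) : Set G))

lemma exists_countable_subgroup (hQ : ℵ₀ < #G) (q : G) :
    ∃ S : Subgroup G, q ∈ S ∧ #S = ℵ₀ := by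
  classical
  have pickspec : ∀ H : Subgroup G, #H ≤ ℵ₀ → ∃ x, x ∉ H := by
    intro H hH
    by_contra h
    push_neg at h
    have htop : H = ⊤ := (Subgroup.eq_top_iff' H).2 h
    subst htop
    have : #G ≤ ℵ₀ :=
      le_trans (le_of_eq (Cardinal.mk_congr Subgroup.topEquiv.toEquiv).symm) hH
    exact absurd hQ (not_lt.2 this)
  set W : ℕ → Subgroup G := Wseq q with hW
  have hW0 : W 0 = Subgroup.closure {q} := rfl
  have hWsucc : ∀ n, W (n + 1) = Subgroup.closure (insert (pickOut (W n)) ((W n) : Set G)) :=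
    fun n => rfl
  have hWcard : ∀ n, #(W n) ≤ ℵ₀ := by
    intro n
    induction n with
    | zero =>
      rw [hW0]
      refine le_trans (mk_closure_le _) (max_le ?_ le_rfl)
      simpa using Cardinal.one_le_aleph0
    | succ n ih =>
      rw [hWsucc n]
      refine le_trans (mk_closure_le _) (max_le ?_ le_rfl)
      calc #(insert (pickOut (W n)) ((W n) : Set G) : Set G)
          ≤ #((W n) : Set G) + 1 := Cardinal.mk_insert_le
        _ ≤ ℵ₀ + 1 := by exact add_le_add ih le_rfl
        _ = ℵ₀ := by simp
  have hWle : ∀ n, W n ≤ W (n + 1) := by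
    intro n
    rw [hWsucc n]
    intro x hx
    exact Subgroup.subset_closure (Set.mem_insert_of_mem _ hx)
  have hmono : Monotone W := monotone_nat_of_le_succ hWle
  have hpick_ex : ∀ n, ∃ x, x ∉ W n := fun n => pickspec _ (hWcard n)
  have hpick_not : ∀ n, pickOut (W n) ∉ W n := fun n => pickOut_not_mem (hpick_ex n)
  have hpick_mem : ∀ n, pickOut (W n) ∈ W (n + 1) := by
    intro n
    rw [hWsucc n]
    exact Subgroup.subset_closure (Set.mem_insert _ _)
  refine ⟨⨆ n, W n, ?_, ?_⟩
  · exact (le_iSup W 0) (by rw [hW0]; exact Subgroup.subset_closure rfl)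
  · have hcoe : ((⨆ n, W n : Subgroup G) : Set G) = ⋃ n, ((W n) : Set G) :=
      Subgroup.coe_iSup_of_directed hmono.directed_le
    apply le_antisymm
    · calc #(⨆ n, W n : Subgroup G)
          = #(⋃ n, ((W n) : Set G)) := Cardinal.mk_congr (Equiv.setCongr hcoe)
        _ ≤ ℵ₀ * ⨆ n, #((W n) : Set G) := by
            have h := Cardinal.mk_iUnion_le_lift (fun n : ℕ => ((W n) : Set G))
            simpa only [Cardinal.lift_uzero, Cardinal.mk_nat, Cardinal.lift_aleph0] using h
        _ ≤ ℵ₀ * ℵ₀ := mul_le_mul' le_rfl (ciSup_le' fun n => hWcard n)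
        _ = ℵ₀ := by simp
    · have hmem : ∀ n, pickOut (W n) ∈ (⨆ m, W m : Subgroup G) := fun n =>
        (le_iSup W (n + 1)) (hpick_mem n)
      have hne : ∀ a b : ℕ, a < b → pickOut (W a) ≠ pickOut (W b) := by
        intro a b hab heq
        have h1 : pickOut (W a) ∈ W b := hmono (Nat.succ_le_of_lt hab) (hpick_mem a)
        rw [heq] at h1
        exact hpick_not b h1
      have hinj : Function.Injective
          (fun n : ℕ => (⟨pickOut (W n), hmem n⟩ : (⨆ m, W m : Subgroup G))) := by
        intro a b hab
        simp only [Subtype.mk.injEq] at hab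
        rcases lt_trichotomy a b with h | h | h
        · exact absurd hab (hne a b h)
        · exact h
        · exact absurd hab.symm (hne b a h)
      exact Cardinal.aleph0_le_mk_iff.2 (Infinite.of_injective _ hinj)

end GroupAux

section CommGroupAux

variable {G : Type u} [CommGroup G]

lemma aleph0_lt_quotient {H : Subgroup G} (hG : ℵ₀ < #G) (hH : #H < #G) :
    ℵ₀ < #(G ⧸ H) := by
  by_contra hle
  push_neg at hle
  have hmul : #G = #(G ⧸ H) * #H := by
    rw [Cardinal.mk_congr (Subgroup.groupEquivQuotientProdSubgroup (s := H)),
      Cardinal.mk_prod, Cardinal.lift_id, Cardinal.lift_id]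
  have h1 : #G ≤ ℵ₀ * #H := hmul.le.trans (mul_le_mul' hle le_rfl)
  have h2 : #G ≤ max (max ℵ₀ #H) ℵ₀ := h1.trans (Cardinal.mul_le_max _ _)
  have h3 : max (max ℵ₀ #H) ℵ₀ = max ℵ₀ #H :=
    max_eq_left (le_max_left _ _)
  rw [h3] at h2
  exact absurd h2 (not_le.2 (max_lt hG hH))

lemma exists_step (H : Subgroup G) (hH : ℵ₀ < #(G ⧸ H)) (g : G) :
    ∃ K : Subgroup G, H ≤ K ∧ g ∈ K ∧
      #(K ⧸ H.subgroupOf K) = ℵ₀ ∧ #K ≤ max #H ℵ₀ := by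
  obtain ⟨S, hqS, hScard⟩ := exists_countable_subgroup hH (QuotientGroup.mk g)
  set K := S.comap (QuotientGroup.mk' H) with hK
  have hle : H ≤ K := by
    intro h hh
    have : QuotientGroup.mk' H h = 1 := (QuotientGroup.eq_one_iff h).2 hh
    simp only [hK, Subgroup.mem_comap, this]
    exact S.one_mem
  have hker : ((QuotientGroup.mk' H).domRestrict K).ker = H.subgroupOf K := by
    rw [MonoidHom.ker_domRestrict, QuotientGroup.ker_mk']
  have hrange : ((QuotientGroup.mk' H).domRestrict K).range = S := by
    rw [MonoidHom.domRestrict_range,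
      Subgroup.map_comap_eq_self_of_surjective (QuotientGroup.mk'_surjective H)]
  have e1 := QuotientGroup.quotientKerEquivRange ((QuotientGroup.mk' H).domRestrict K)
  have e0 : (K ⧸ H.subgroupOf K) ≃* (K ⧸ ((QuotientGroup.mk' H).domRestrict K).ker) :=
    QuotientGroup.quotientMulEquivOfEq hker.symm
  have e2 : (((QuotientGroup.mk' H).domRestrict K).range : Set (G ⧸ H)) ≃ (S : Set (G ⧸ H)) :=
    Equiv.setCongr (by rw [hrange])
  have hquot : #(K ⧸ H.subgroupOf K) = ℵ₀ := by
    rw [Cardinal.mk_congr ((e0.toEquiv.trans e1.toEquiv).trans e2)]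
    exact hScard
  refine ⟨K, hle, hqS, hquot, ?_⟩
  have e2 := Subgroup.groupEquivQuotientProdSubgroup (α := K) (s := H.subgroupOf K)
  have e3 := Subgroup.subgroupOfEquivOfLe hle
  have hKcard : #K = ℵ₀ * #H := by
    rw [Cardinal.mk_congr e2, Cardinal.mk_prod, Cardinal.lift_id, Cardinal.lift_id,
      hquot, Cardinal.mk_congr e3.toEquiv]
  rw [hKcard]
  refine le_trans (Cardinal.mul_le_max _ _) ?_
  rw [max_comm ℵ₀ (#H)]
  exact max_le le_rfl (le_max_right _ _)

noncomputable def next (H : Subgroup G) (g : G) : Subgroup G :=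
  if h : ℵ₀ < #(G ⧸ H) then (exists_step H h g).choose else ⊤

lemma le_next (H : Subgroup G) (g : G) : H ≤ next H g := by
  unfold next
  split_ifs with h
  · exact (exists_step H h g).choose_spec.1
  · exact le_top

lemma mem_next (H : Subgroup G) (g : G) : g ∈ next H g := by
  unfold next
  split_ifs with h
  · exact (exists_step H h g).choose_spec.2.1
  · trivial

lemma next_quot_card (H : Subgroup G) (g : G) (h : ℵ₀ < #(G ⧸ H)) :
    #(next H g ⧸ H.subgroupOf (next H g)) = ℵ₀ := by
  have hnext : next H g = (exists_step H h g).choose := by rw [next, dif_pos h]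
  rw [hnext]
  exact (exists_step H h g).choose_spec.2.2.1

lemma next_card_le (H : Subgroup G) (g : G) (h : ℵ₀ < #(G ⧸ H)) :
    #(next H g) ≤ max #H ℵ₀ := by
  have hnext : next H g = (exists_step H h g).choose := by rw [next, dif_pos h]
  rw [hnext]
  exact (exists_step H h g).choose_spec.2.2.2

noncomputable def chain (g : Ordinal.{u} → G) (o : Ordinal.{u}) : Subgroup G :=
  Ordinal.limitRecOn o ⊥ (fun α ih => next ih (g α))
    (fun β _ ih => ⨆ (α : Ordinal.{u}) (h : α < β), ih α h)

lemma chain_zero (g : Ordinal.{u} → G) : chain g 0 = ⊥ :=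
  Ordinal.limitRecOn_zero _ _ _

lemma chain_succ (g : Ordinal.{u} → G) (α : Ordinal.{u}) :
    chain g (α + 1) = next (chain g α) (g α) := by
  rw [Ordinal.add_one_eq_succ]
  exact Ordinal.limitRecOn_succ _ _ _ _

lemma chain_limit (g : Ordinal.{u} → G) {β : Ordinal.{u}} (hβ : Order.IsSuccLimit β) :
    chain g β = ⨆ (α : Ordinal.{u}) (_ : α < β), chain g α :=
  Ordinal.limitRecOn_limit _ _ _ _ hβ

lemma chain_mono (g : Ordinal.{u} → G) : Monotone (chain g) := by
  intro α β h
  induction β using Ordinal.limitRecOn with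
  | zero =>
    rw [nonpos_iff_eq_zero] at h
    subst h
    exact le_rfl
  | add_one β ih =>
    rw [Ordinal.add_one_eq_succ] at h ⊢
    rcases (Order.le_succ_iff_eq_or_le.1 h) with rfl | hle
    · exact le_rfl
    · refine le_trans (ih hle) ?_
      rw [← Ordinal.add_one_eq_succ, chain_succ]
      exact le_next _ _
  | limit β hβ ih =>
    rcases eq_or_lt_of_le h with rfl | hlt
    · exact le_rfl
    · rw [chain_limit g hβ]
      exact le_iSup₂ (f := fun (α : Ordinal.{u}) (_ : α < β) => chain g α) α hlt

lemma coe_chain_limit (g : Ordinal.{u} → G) {β : Ordinal.{u}} (hβ : Order.IsSuccLimit β) :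
    (chain g β : Set G) = ⋃ (α : Ordinal.{u}) (_ : α < β), (chain g α : Set G) := by
  have hne : Nonempty (Set.Iio β) := ⟨⟨0, hβ.pos⟩⟩
  have h1 : (⨆ (α : Ordinal.{u}) (_ : α < β), chain g α) =
      ⨆ x : Set.Iio β, chain g x := (iSup_subtype'' (Set.Iio β) (chain g)).symm
  have hmono2 : Monotone (fun x : Set.Iio β => chain g x) :=
    fun x y hxy => chain_mono g hxy
  have hdir : Directed (· ≤ ·) (fun x : Set.Iio β => chain g x) := hmono2.directed_le
  rw [chain_limit g hβ, h1, Subgroup.coe_iSup_of_directed hdir]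
  ext x
  simp only [Set.mem_iUnion, SetLike.mem_coe, Subtype.exists, Set.mem_Iio, exists_prop]

end CommGroupAux

end ExistsSubgroupChainAux

open ExistsSubgroupChainAux

/-- Every Abelian group `G` of cardinality `γ > ℵ₀` admits a family `(G_α)_{α<γ}` of
subgroups with `G_0 = {e}`, `G_α ⊊ G_β` for `α < β < γ`, `G_β = ⋃_{α<β} G_α` for limit
`β < γ`, `⋃_{α<γ} G_α = G`, and `[G_{α+1} : G_α] = ℵ₀` for every `α < γ`. -/
theorem exists_subgroup_chain (γ : Cardinal.{u}) (hγ : ℵ₀ < γ)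
    (G : Type u) [CommGroup G] (hG : #G = γ) :
    ∃ Gs : Ordinal.{u} → Subgroup G,
      Gs 0 = ⊥ ∧
      (∀ α β : Ordinal.{u}, α < β → β < γ.ord → Gs α < Gs β) ∧
      (∀ β : Ordinal.{u}, β < γ.ord → Order.IsSuccLimit β →
        (Gs β : Set G) = ⋃ (α : Ordinal.{u}) (_ : α < β), (Gs α : Set G)) ∧
      (⋃ (α : Ordinal.{u}) (_ : α < γ.ord), (Gs α : Set G)) = Set.univ ∧
      (∀ α : Ordinal.{u}, α < γ.ord →
        #(↥(Gs (α + 1)) ⧸ ((Gs α).subgroupOf (Gs (α + 1)))) = ℵ₀) := by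
  classical
  have hG' : ℵ₀ < #G := by rw [hG]; exact hγ
  obtain ⟨e⟩ : Nonempty (γ.ord.ToType ≃ G) := by
    rw [← Cardinal.eq, Cardinal.mk_ord_toType, hG]
  set en : Ordinal.{u} → G := fun α =>
    if h : α < γ.ord then e ((Ordinal.ToType.mk (o := γ.ord)) ⟨α, h⟩) else 1 with hen
  -- cardinality invariant
  have hcard : ∀ β : Ordinal.{u}, β < γ.ord → #(chain en β) ≤ max β.card ℵ₀ := by
    intro β
    induction β using Ordinal.limitRecOn with
    | zero =>
      intro _
      rw [chain_zero en]
      refine le_trans ?_ (le_max_right _ _)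
      refine le_trans ?_ Cardinal.one_le_aleph0
      exact Cardinal.le_one_iff_subsingleton.2 inferInstance
    | add_one β ih =>
      intro hb
      have hβ : β < γ.ord := lt_of_le_of_lt le_self_add hb
      have h1 : #(chain en β) < #G := by
        rw [hG]
        exact lt_of_le_of_lt (ih hβ) (max_lt (Cardinal.lt_ord.1 hβ) hγ)
      have h2 : ℵ₀ < #(G ⧸ chain en β) := aleph0_lt_quotient hG' h1
      rw [chain_succ]
      calc #(next (chain en β) (en β))
          ≤ max #(chain en β) ℵ₀ := next_card_le _ _ h2
        _ ≤ max (max β.card ℵ₀) ℵ₀ := max_le_max (ih hβ) le_rfl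
        _ = max β.card ℵ₀ := by rw [max_assoc, max_self]
        _ ≤ max (β + 1).card ℵ₀ :=
            max_le_max (Ordinal.card_le_card le_self_add) le_rfl
    | limit β hβ ih =>
      intro hb
      have hne : Nonempty (Set.Iio β) := ⟨⟨0, hβ.pos⟩⟩
      have hsurj : Function.Surjective (Ordinal.ToType.mk (o := β)).symm :=
        (Ordinal.ToType.mk (o := β)).symm.surjective
      have hcoe : (chain en β : Set G) =
          ⋃ x : β.ToType,
            (chain en (((Ordinal.ToType.mk (o := β)).symm x : Set.Iio β) : Ordinal.{u}) : Set G) := by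
      -- first: coe_chain_limit, then subtype, then reindex
        rw [coe_chain_limit en hβ]
        rw [← Set.iUnion_subtype (fun α : Ordinal.{u} => α < β)
          (fun α => (chain en (α : Ordinal.{u}) : Set G))]
        exact (hsurj.iUnion_comp
          (fun y : Set.Iio β => (chain en (y : Ordinal.{u}) : Set G))).symm
      calc #(chain en β)
          = #(⋃ x : β.ToType,
              (chain en (((Ordinal.ToType.mk (o := β)).symm x : Set.Iio β) : Ordinal.{u}) : Set G)) :=
            Cardinal.mk_congr (Equiv.setCongr hcoe)
        _ ≤ #β.ToType * ⨆ x : β.ToType,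
            #(chain en (((Ordinal.ToType.mk (o := β)).symm x : Set.Iio β) : Ordinal.{u}) : Set G) :=
            Cardinal.mk_iUnion_le _
        _ ≤ β.card * max β.card ℵ₀ := by
            refine mul_le_mul' (le_of_eq (Cardinal.mk_toType β)) (ciSup_le' ?_)
            intro x
            have hαβ : (((Ordinal.ToType.mk (o := β)).symm x : Set.Iio β) : Ordinal.{u}) < β :=
              ((Ordinal.ToType.mk (o := β)).symm x).2
            refine le_trans (ih _ hαβ (hαβ.trans hb)) ?_
            exact max_le_max (Ordinal.card_le_card hαβ.le) le_rfl
        _ ≤ max β.card ℵ₀ * max β.card ℵ₀ := mul_le_mul' (le_max_left _ _) le_rfl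
        _ = max β.card ℵ₀ := Cardinal.mul_eq_self (le_max_right _ _)
  have hbig : ∀ β : Ordinal.{u}, β < γ.ord → ℵ₀ < #(G ⧸ chain en β) := by
    intro β hβ
    refine aleph0_lt_quotient hG' ?_
    rw [hG]
    exact lt_of_le_of_lt (hcard β hβ) (max_lt (Cardinal.lt_ord.1 hβ) hγ)
  have hidx : ∀ α : Ordinal.{u}, α < γ.ord →
      #(↥(chain en (α + 1)) ⧸ (chain en α).subgroupOf (chain en (α + 1))) = ℵ₀ := by
    intro α hα
    have hqc : ∀ (K K' H : Subgroup G), K = K' →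
        #(K ⧸ H.subgroupOf K) = #(K' ⧸ H.subgroupOf K') := by
      rintro K K' H rfl
      rfl
    rw [hqc _ _ _ (chain_succ en α)]
    exact next_quot_card _ _ (hbig α hα)
  have hsucc_lt : ∀ α : Ordinal.{u}, α < γ.ord → chain en α < chain en (α + 1) := by
    intro α hα
    have hle2 : chain en α ≤ chain en (α + 1) := chain_mono en le_self_add
    refine lt_of_le_of_ne hle2 (fun heq => ?_)
    have htop : (chain en α).subgroupOf (chain en (α + 1)) = ⊤ :=
      Subgroup.subgroupOf_eq_top.2 (le_of_eq heq.symm)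
    have hcontra := hidx α hα
    rw [htop] at hcontra
    have hsub : Subsingleton
        (↥(chain en (α + 1)) ⧸ (⊤ : Subgroup ↥(chain en (α + 1)))) :=
      QuotientGroup.subsingleton_quotient_top
    have h1 : #(↥(chain en (α + 1)) ⧸ (⊤ : Subgroup ↥(chain en (α + 1)))) ≤ 1 :=
      Cardinal.le_one_iff_subsingleton.2 hsub
    rw [hcontra] at h1
    exact absurd h1 (not_le.2 Cardinal.one_lt_aleph0)
  refine ⟨chain en, chain_zero en, ?_, ?_, ?_, hidx⟩
  · intro α β hab hβ
    refine lt_of_lt_of_le (hsucc_lt α (hab.trans hβ)) (chain_mono en ?_)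
    rw [Ordinal.add_one_eq_succ]
    exact Order.succ_le_of_lt hab
  · intro β _ hβlim
    exact coe_chain_limit en hβlim
  · rw [Set.eq_univ_iff_forall]
    intro x
    set y := (Ordinal.ToType.mk (o := γ.ord)).symm (e.symm x) with hy
    have hylt : (y : Ordinal.{u}) < γ.ord := y.2
    have hgy : en (y : Ordinal.{u}) = x := by
      rw [hen]
      dsimp only
      rw [dif_pos hylt]
      rw [show (⟨(y : Ordinal.{u}), hylt⟩ : Set.Iio γ.ord) = y from Subtype.ext rfl]
      rw [hy, OrderIso.apply_symm_apply, Equiv.apply_symm_apply]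
    have hx : x ∈ chain en ((y : Ordinal.{u}) + 1) := by
      rw [chain_succ, ← hgy]
      exact mem_next _ _
    have hlim : Order.IsSuccLimit γ.ord := Cardinal.isSuccLimit_ord hγ.le
    refine Set.mem_iUnion.2 ⟨(y : Ordinal.{u}) + 1, Set.mem_iUnion.2 ⟨?_, hx⟩⟩
    rw [Ordinal.add_one_eq_succ]
    exact hlim.succ_lt hylt
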